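/- Let ∂_t f_∞ be bounded on [0,T']×ℝ⁶, let f, f_∞ vanish for |p| > P or |y| > R + Pt (t ∈ [0,T']), and set D_F(t) = sup_{0≤τ≤t, x, p} |f(τ,x,p) - f_∞(τ,x,p)|. Then for all x ∈ ℝ³, t ∈ [0,T'] and c ≥ 1: ∫∫ | f(max{0, t - c^{-1}|y-x|}, y, p) - f_∞(t, y, p) | dp dy/|y-x| ≤ C ( D_F(t) + c^{-1} ) with C depending only on R, P, T', ‖∂_t f_∞‖_∞ (not on c, t, x). -/

import Mathlib

open MeasureTheory

section Aux

local notation "E3" => EuclideanSpace ℝ (Fin 3)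

lemma aux_coord_abs_le_norm (z : E3) (i : Fin 3) : |z i| ≤ ‖z‖ := by
  rw [EuclideanSpace.norm_eq]
  calc |z i| = Real.sqrt (‖z i‖ ^ 2) := by
        rw [Real.sqrt_sq_eq_abs, Real.norm_eq_abs, abs_abs]
    _ ≤ Real.sqrt (∑ j, ‖z j‖ ^ 2) :=
        Real.sqrt_le_sqrt (Finset.single_le_sum (fun j _ => sq_nonneg ‖z j‖) (Finset.mem_univ i))

lemma aux_integrable_w (a : ℝ) :
    Integrable (Set.indicator (Set.Icc (-a) a) (fun u : ℝ => |u| ^ (-(1/3) : ℝ))) := by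
  set b : ℝ := |a| + 1 with hb_def
  have hb : (0:ℝ) < b := by positivity
  set g : ℝ → ℝ := fun u => |u| ^ (-(1/3) : ℝ) with hg_def
  have h1 : IntegrableOn (fun u : ℝ => u ^ (-(1/3) : ℝ)) (Set.Ioo 0 b) :=
    (intervalIntegral.integrableOn_Ioo_rpow_iff hb).2 (by norm_num)
  have h1g : IntegrableOn g (Set.Ioo 0 b) :=
    h1.congr_fun (fun u hu => by simp [g, abs_of_pos hu.1]) measurableSet_Ioo
  have h1i : Integrable (Set.indicator (Set.Ioo 0 b) g) :=
    (integrable_indicator_iff measurableSet_Ioo).2 h1g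
  have h2i : Integrable (fun u : ℝ => Set.indicator (Set.Ioo 0 b) g (-u)) := h1i.comp_neg
  have heq : (fun u : ℝ => Set.indicator (Set.Ioo 0 b) g (-u))
      = Set.indicator (Set.Ioo (-b) 0) g := by
    funext u
    by_cases h : u ∈ Set.Ioo (-b) 0
    · have h' : -u ∈ Set.Ioo 0 b := ⟨by linarith [h.2], by linarith [h.1]⟩
      rw [Set.indicator_of_mem h', Set.indicator_of_mem h]
      simp [g, abs_neg]
    · have h' : -u ∉ Set.Ioo 0 b := by
        intro hh
        exact h ⟨by linarith [hh.2], by linarith [hh.1]⟩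
      rw [Set.indicator_of_notMem h', Set.indicator_of_notMem h]
  have h2g : IntegrableOn g (Set.Ioo (-b) 0) := by
    rw [heq] at h2i
    exact (integrable_indicator_iff measurableSet_Ioo).1 h2i
  have h0 : IntegrableOn g ({0} : Set ℝ) := by
    rw [IntegrableOn, Measure.restrict_eq_zero.2 (by simp)]
    exact integrable_zero_measure
  have hunion : IntegrableOn g ((Set.Ioo (-b) 0 ∪ Set.Ioo 0 b) ∪ {0}) := (h2g.union h1g).union h0
  have hsub : Set.Icc (-a) a ⊆ (Set.Ioo (-b) 0 ∪ Set.Ioo 0 b) ∪ {0} := by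
    intro u hu
    have h1a := le_abs_self a
    have h2a := neg_abs_le a
    rcases lt_trichotomy u 0 with h | h | h
    · exact Or.inl (Or.inl ⟨by simp only [hb_def]; linarith [hu.1], h⟩)
    · exact Or.inr (by simp [h])
    · exact Or.inl (Or.inr ⟨h, by simp only [hb_def]; linarith [hu.2]⟩)
  exact (integrable_indicator_iff measurableSet_Icc).2 (hunion.mono_set hsub)

lemma aux_integrable_inv_norm_ball (r : ℝ) :
    Integrable (Set.indicator (Metric.closedBall (0:E3) r) (fun z => ‖z‖⁻¹)) := by
  set w : ℝ → ℝ := Set.indicator (Set.Icc (-r) r) (fun u : ℝ => |u| ^ (-(1/3) : ℝ)) with hw_def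
  have hw : Integrable w := aux_integrable_w r
  have hw0 : ∀ u, 0 ≤ w u :=
    fun u => Set.indicator_nonneg (fun v _ => Real.rpow_nonneg (abs_nonneg v) _) u
  have hG0 : Integrable (fun x : Fin 3 → ℝ => ∏ i, w (x i)) :=
    Integrable.fintype_prod (fun _ => hw)
  have hG : Integrable (fun z : E3 => ∏ i, w (z i)) := by
    have := ((EuclideanSpace.volume_preserving_symm_measurableEquiv_toLp (Fin 3)).integrable_comp_emb
      (MeasurableEquiv.measurableEmbedding _)).2 hG0
    exact this
  have hnull : ∀ i : Fin 3, volume {z : E3 | z i = 0} = 0 := by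
    intro i
    set l : E3 →ₗ[ℝ] ℝ :=
      (LinearMap.proj i).comp (WithLp.linearEquiv 2 ℝ (Fin 3 → ℝ)).toLinearMap with hl_def
    have hl : ∀ z : E3, l z = z i := fun z => rfl
    have hker : {z : E3 | z i = 0} = (LinearMap.ker l : Set E3) := by
      ext z
      simp [LinearMap.mem_ker, hl]
    have hne : LinearMap.ker l ≠ ⊤ := by
      rw [Ne, LinearMap.ker_eq_top]
      intro h
      have : l (EuclideanSpace.single i 1) = 0 := by rw [h]; rfl
      rw [hl, EuclideanSpace.single_apply] at this
      simp at this
    rw [hker]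
    exact Measure.addHaar_submodule volume _ hne
  refine hG.mono' ((measurable_norm.inv.indicator
    measurableSet_closedBall).aestronglyMeasurable) ?_
  have hN : volume (⋃ i, {z : E3 | z i = 0}) = 0 := measure_iUnion_null hnull
  filter_upwards [measure_eq_zero_iff_ae_notMem.mp hN] with z hz
  have hz' : ∀ i, z i ≠ 0 := by simpa [Set.mem_iUnion] using hz
  by_cases hzb : z ∈ Metric.closedBall (0:E3) r
  · rw [Set.indicator_of_mem hzb, Real.norm_eq_abs,
      abs_of_nonneg (inv_nonneg.2 (norm_nonneg z))]
    have hzr : ‖z‖ ≤ r := mem_closedBall_zero_iff.1 hzb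
    have hmem : ∀ i, z i ∈ Set.Icc (-r) r := by
      intro i
      have h1 := aux_coord_abs_le_norm z i
      have h2 := abs_le.1 (h1.trans hzr)
      exact ⟨h2.1, h2.2⟩
    have hwz : ∀ i ∈ Finset.univ, w (z i) = |z i| ^ (-(1/3) : ℝ) :=
      fun i _ => Set.indicator_of_mem (hmem i) _
    rw [Finset.prod_congr rfl hwz]
    have hz0 : z ≠ 0 := fun h => hz' 0 (by rw [h]; rfl)
    have hzpos : 0 < ‖z‖ := norm_pos_iff.2 hz0
    have key : ∏ i : Fin 3, |z i| ^ ((1:ℝ)/3) ≤ ‖z‖ := by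
      calc ∏ i : Fin 3, |z i| ^ ((1:ℝ)/3) ≤ ∏ _i : Fin 3, ‖z‖ ^ ((1:ℝ)/3) :=
            Finset.prod_le_prod (fun i _ => Real.rpow_nonneg (abs_nonneg _) _)
              (fun i _ => Real.rpow_le_rpow (abs_nonneg _) (aux_coord_abs_le_norm z i)
                (by norm_num))
        _ = (‖z‖ ^ ((1:ℝ)/3)) ^ (3:ℕ) := by
            simp [Finset.prod_const]
        _ = ‖z‖ := by
            rw [← Real.rpow_natCast (‖z‖ ^ ((1:ℝ)/3)) 3, ← Real.rpow_mul (norm_nonneg z)]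
            norm_num
    have hprodpos : 0 < ∏ i : Fin 3, |z i| ^ ((1:ℝ)/3) :=
      Finset.prod_pos (fun i _ => Real.rpow_pos_of_pos (abs_pos.2 (hz' i)) _)
    have hinv : ‖z‖⁻¹ ≤ (∏ i : Fin 3, |z i| ^ ((1:ℝ)/3))⁻¹ :=
      inv_anti₀ hprodpos key
    refine hinv.trans_eq ?_
    rw [← Finset.prod_inv_distrib]
    refine Finset.prod_congr rfl (fun i _ => ?_)
    rw [← Real.rpow_neg (abs_nonneg _)]
  · rw [Set.indicator_of_notMem hzb]
    simpa using Finset.prod_nonneg (fun i _ => hw0 (z i))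

end Aux

/-- the key retardation estimate in the non-relativistic limit. -/
theorem retardation_estimate (R P T' M : ℝ) (hR : 0 ≤ R) (hP : 0 ≤ P) (hT' : 0 ≤ T')
    (hM : 0 ≤ M) :
    ∃ C : ℝ, ∀ (f finf : ℝ → EuclideanSpace ℝ (Fin 3) → EuclideanSpace ℝ (Fin 3) → ℝ)
      (DF : ℝ → ℝ) (c t : ℝ) (x : EuclideanSpace ℝ (Fin 3)),
      1 ≤ c → t ∈ Set.Icc 0 T' →
      -- `f` and `f_∞` vanish for large momenta or outside the light cone
      (∀ s ∈ Set.Icc 0 T', ∀ (y p : EuclideanSpace ℝ (Fin 3)),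
        P < ‖p‖ ∨ R + P * s < ‖y‖ → f s y p = 0 ∧ finf s y p = 0) →
      -- `f_∞` is differentiable in time with bounded derivative
      (∀ (y p : EuclideanSpace ℝ (Fin 3)), ∀ s ∈ Set.Icc 0 T',
        ∃ d : ℝ, HasDerivAt (fun τ => finf τ y p) d s ∧ |d| ≤ M) →
      -- `DF t` bounds the uniform distance of `f` and `f_∞` up to time `t`
      (∀ τ ∈ Set.Icc 0 t, ∀ y p, |f τ y p - finf τ y p| ≤ DF t) →
      (∫ y : EuclideanSpace ℝ (Fin 3),
          (∫ p : EuclideanSpace ℝ (Fin 3),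
            |f (max 0 (t - c⁻¹ * dist y x)) y p - finf t y p|) / dist y x) ≤
        C * (DF t + c⁻¹) := by
  classical
  set E3 := EuclideanSpace ℝ (Fin 3)
  set R₀ : ℝ := R + P * T' with hR₀_def
  have hR₀ : 0 ≤ R₀ := by positivity
  set V : ℝ := (volume (Metric.closedBall (0:E3) P)).toReal with hV_def
  set W : ℝ := (volume (Metric.closedBall (0:E3) R₀)).toReal with hW_def
  set ψ : E3 → ℝ := Set.indicator (Metric.closedBall (0:E3) (R₀+1)) (fun z => ‖z‖⁻¹) with hψ_def
  have hψint : Integrable ψ := aux_integrable_inv_norm_ball (R₀+1)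
  have hψ0 : ∀ z, 0 ≤ ψ z :=
    fun z => Set.indicator_nonneg (fun v _ => inv_nonneg.2 (norm_nonneg v)) z
  set J : ℝ := ∫ z, ψ z with hJ_def
  have hJ : 0 ≤ J := integral_nonneg hψ0
  have hV : 0 ≤ V := ENNReal.toReal_nonneg
  have hW : 0 ≤ W := ENNReal.toReal_nonneg
  refine ⟨V * (J + W) + M * V * W, ?_⟩
  intro f finf DF c t x hc ht hvanish hderiv hDF
  have hc0 : (0:ℝ) ≤ c⁻¹ := inv_nonneg.2 (by linarith)
  have hDF0 : 0 ≤ DF t := le_trans (abs_nonneg _) (hDF t ⟨ht.1, le_refl t⟩ x x)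
  set χ : E3 → ℝ := Set.indicator (Metric.closedBall (0:E3) R₀) (fun _ => (1:ℝ)) with hχ_def
  have hχ0 : ∀ z, 0 ≤ χ z := fun z => Set.indicator_nonneg (fun _ _ => zero_le_one) z
  have hχint : Integrable χ :=
    (integrable_indicator_iff measurableSet_closedBall).2
      (integrableOn_const measure_closedBall_lt_top.ne)
  set h : E3 → ℝ := fun y => DF t * V * ψ (y - x) + (DF t * V + M * c⁻¹ * V) * χ y with hh_def
  have hh0 : ∀ y, 0 ≤ h y := by
    intro y
    have h1 : 0 ≤ DF t * V := mul_nonneg hDF0 hV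
    have h2 : 0 ≤ M * c⁻¹ * V := by positivity
    exact add_nonneg (mul_nonneg h1 (hψ0 _)) (mul_nonneg (by linarith) (hχ0 _))
  have hψx : Integrable (fun y => ψ (y - x)) := hψint.comp_sub_right x
  have hhint : Integrable h :=
    (hψx.const_mul (DF t * V)).add (hχint.const_mul (DF t * V + M * c⁻¹ * V))
  -- the pointwise bound
  have hptwise : ∀ y : E3,
      (∫ p : E3, |f (max 0 (t - c⁻¹ * dist y x)) y p - finf t y p|) / dist y x ≤ h y := by
    intro y
    set d : ℝ := dist y x with hd_def
    have hd0 : 0 ≤ d := dist_nonneg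
    set s' : ℝ := max 0 (t - c⁻¹ * d) with hs'_def
    have hs'0 : 0 ≤ s' := le_max_left _ _
    have hcd0 : 0 ≤ c⁻¹ * d := mul_nonneg hc0 hd0
    have hs't : s' ≤ t := max_le ht.1 (by linarith)
    have hs'T : s' ≤ T' := hs't.trans ht.2
    have hts' : t - s' ≤ c⁻¹ * d := by
      have := le_max_right 0 (t - c⁻¹ * d)
      linarith
    by_cases hyR : ‖y‖ ≤ R₀
    · -- inner integral bound
      set K : ℝ := DF t + M * (c⁻¹ * d) with hK_def
      have hK0 : 0 ≤ K := by positivity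
      have hinner : (∫ p : E3, |f s' y p - finf t y p|) ≤ K * V := by
        have hmaj : Integrable (Set.indicator (Metric.closedBall (0:E3) P) (fun _ => K)) :=
          (integrable_indicator_iff measurableSet_closedBall).2
            (integrableOn_const measure_closedBall_lt_top.ne)
        have hb : ∀ p : E3, |f s' y p - finf t y p| ≤
            Set.indicator (Metric.closedBall (0:E3) P) (fun _ => K) p := by
          intro p
          by_cases hp : p ∈ Metric.closedBall (0:E3) P
          · rw [Set.indicator_of_mem hp]
            have h1 : |f s' y p - finf s' y p| ≤ DF t := hDF s' ⟨hs'0, hs't⟩ y p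
            -- mean value estimate
            choose! D hD hDb using hderiv y p
            have hmvt : ‖finf t y p - finf s' y p‖ ≤ M * ‖t - s'‖ :=
              (convex_Icc 0 T').norm_image_sub_le_of_norm_hasDerivWithin_le
                (fun s hs => (hD s hs).hasDerivWithinAt)
                (fun s hs => by simpa [Real.norm_eq_abs] using hDb s hs)
                ⟨hs'0, hs'T⟩ ht
            have h2 : |finf s' y p - finf t y p| ≤ M * (t - s') := by
              rw [Real.norm_eq_abs, Real.norm_eq_abs,
                abs_of_nonneg (by linarith : (0:ℝ) ≤ t - s')] at hmvt
              calc |finf s' y p - finf t y p| = |finf t y p - finf s' y p| := abs_sub_comm _ _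
                _ ≤ M * (t - s') := hmvt
            have h3 : M * (t - s') ≤ M * (c⁻¹ * d) := mul_le_mul_of_nonneg_left hts' hM
            calc |f s' y p - finf t y p|
                ≤ |f s' y p - finf s' y p| + |finf s' y p - finf t y p| := abs_sub_le _ _ _
              _ ≤ DF t + M * (t - s') := add_le_add h1 h2
              _ ≤ K := by rw [hK_def]; linarith
          · have hPp : P < ‖p‖ := by
              simpa [mem_closedBall_zero_iff, not_le] using hp
            obtain ⟨hf0, _⟩ := hvanish s' ⟨hs'0, hs'T⟩ y p (Or.inl hPp)
            obtain ⟨_, hfinf0⟩ := hvanish t ht y p (Or.inl hPp)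
            rw [hf0, hfinf0]
            simpa using Set.indicator_nonneg (fun (_ : E3) _ => hK0) p
        calc (∫ p : E3, |f s' y p - finf t y p|)
            ≤ ∫ p : E3, Set.indicator (Metric.closedBall (0:E3) P) (fun _ => K) p :=
              integral_mono_of_nonneg (Filter.Eventually.of_forall fun p => abs_nonneg _)
                hmaj (Filter.Eventually.of_forall hb)
          _ = (volume (Metric.closedBall (0:E3) P)).toReal • K :=
              integral_indicator_const K measurableSet_closedBall
          _ = K * V := by rw [smul_eq_mul, hV_def, mul_comm]
      have hχy : χ y = 1 := Set.indicator_of_mem (mem_closedBall_zero_iff.2 hyR) _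
      by_cases hd : d = 0
      · rw [hd, div_zero]
        exact hh0 y
      · have hdpos : 0 < d := lt_of_le_of_ne hd0 (Ne.symm hd)
        have hdiv : (∫ p : E3, |f s' y p - finf t y p|) / d ≤ (K * V) / d := by
          gcongr
        refine hdiv.trans ?_
        have halg : K * V / d = DF t * V * d⁻¹ + M * c⁻¹ * V := by
          rw [hK_def]
          field_simp
        rw [halg]
        simp only [hh_def]
        by_cases hdR : d ≤ R₀ + 1
        · have hmemb : y - x ∈ Metric.closedBall (0:E3) (R₀+1) := by
            rw [mem_closedBall_zero_iff, ← dist_eq_norm]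
            exact hdR
          have hψval : ψ (y - x) = d⁻¹ := by
            rw [hψ_def, Set.indicator_of_mem hmemb, ← dist_eq_norm]
          rw [hψval, hχy]
          have : 0 ≤ DF t * V := mul_nonneg hDF0 hV
          linarith
        · push_neg at hdR
          have hmemb : y - x ∉ Metric.closedBall (0:E3) (R₀+1) := by
            rw [mem_closedBall_zero_iff, ← dist_eq_norm]
            linarith
          have hψval : ψ (y - x) = 0 := by
            rw [hψ_def, Set.indicator_of_notMem hmemb]
          rw [hψval, hχy]
          have hdinv : d⁻¹ ≤ 1 := by
            rw [← one_div]
            exact div_le_one_of_le₀ (by linarith) (by linarith)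
          have h1 : DF t * V * d⁻¹ ≤ DF t * V * 1 :=
            mul_le_mul_of_nonneg_left hdinv (mul_nonneg hDF0 hV)
          linarith
    · -- y outside the support: inner integral vanishes
      push_neg at hyR
      have hzero : (fun p : E3 => |f s' y p - finf t y p|) = fun _ => 0 := by
        funext p
        have hys' : R + P * s' < ‖y‖ := by
          have : P * s' ≤ P * T' := mul_le_mul_of_nonneg_left hs'T hP
          rw [hR₀_def] at hyR
          linarith
        have hyt : R + P * t < ‖y‖ := by
          have : P * t ≤ P * T' := mul_le_mul_of_nonneg_left ht.2 hP
          rw [hR₀_def] at hyR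
          linarith
        obtain ⟨hf0, _⟩ := hvanish s' ⟨hs'0, hs'T⟩ y p (Or.inr hys')
        obtain ⟨_, hfinf0⟩ := hvanish t ht y p (Or.inr hyt)
        rw [hf0, hfinf0]
        simp
      rw [hzero, integral_zero, zero_div]
      exact hh0 y
  -- conclude
  have hmono : (∫ y : E3,
      (∫ p : E3, |f (max 0 (t - c⁻¹ * dist y x)) y p - finf t y p|) / dist y x) ≤ ∫ y, h y :=
    integral_mono_of_nonneg
      (Filter.Eventually.of_forall fun y =>
        div_nonneg (integral_nonneg fun p => abs_nonneg _) dist_nonneg)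
      hhint (Filter.Eventually.of_forall hptwise)
  have hint : (∫ y, h y) = DF t * V * J + (DF t * V + M * c⁻¹ * V) * W := by
    rw [hh_def]
    rw [integral_add (hψx.const_mul (DF t * V)) (hχint.const_mul (DF t * V + M * c⁻¹ * V)),
      integral_const_mul, integral_const_mul, integral_sub_right_eq_self ψ x]
    rw [hχ_def, integral_indicator_const (1:ℝ) measurableSet_closedBall]
    rw [hJ_def, hW_def, smul_eq_mul, mul_one, measureReal_def]
  have hfinal : DF t * V * J + (DF t * V + M * c⁻¹ * V) * W ≤
      (V * (J + W) + M * V * W) * (DF t + c⁻¹) := by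
    nlinarith [mul_nonneg (mul_nonneg hV (add_nonneg hJ hW)) hc0,
      mul_nonneg (mul_nonneg (mul_nonneg hM hV) hW) hDF0]
  calc (∫ y : E3,
      (∫ p : E3, |f (max 0 (t - c⁻¹ * dist y x)) y p - finf t y p|) / dist y x) ≤ ∫ y, h y := hmono
    _ = DF t * V * J + (DF t * V + M * c⁻¹ * V) * W := hint
    _ ≤ (V * (J + W) + M * V * W) * (DF t + c⁻¹) := hfinal
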